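/- If a finite simple graph G = (V, E) has nested solutions (NS), then δ_G(i+1) − δ_G(i) ≤ 1 for all i ∈ {1, …, |V| − 1}. -/

import Mathlib

open Finset
open scoped Classical

/-- Number of edges of `G` with both endpoints in `A`. -/
noncomputable def edgesIn {V : Type*} [Fintype V] (G : SimpleGraph V) (A : Finset V) : ℕ :=
  (G.edgeFinset.filter (fun e => ∀ v ∈ e, v ∈ A)).card

/-- `I_G(m)`: maximum number of induced edges over all `m`-subsets. -/
noncomputable def maxEdgesIn {V : Type*} [Fintype V] (G : SimpleGraph V) (m : ℕ) : ℕ :=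
  (Finset.univ.powersetCard m).sup (edgesIn G)

/-- The `δ`-sequence of `G`. -/
noncomputable def deltaSeq {V : Type*} [Fintype V] (G : SimpleGraph V) (m : ℕ) : ℤ :=
  (maxEdgesIn G m : ℤ) - (maxEdgesIn G (m - 1) : ℤ)

/-- `G` has nested solutions. -/
def hasNS {V : Type*} [Fintype V] (G : SimpleGraph V) : Prop :=
  ∃ A : ℕ → Finset V,
    (∀ i, 1 ≤ i → i < Fintype.card V → A i ⊆ A (i + 1)) ∧
    (∀ i, 1 ≤ i → i ≤ Fintype.card V →
      (A i).card = i ∧ edgesIn G (A i) = maxEdgesIn G i)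

/-- `G` is `δ`-dense. -/
def deltaDense {V : Type*} [Fintype V] (G : SimpleGraph V) : Prop :=
  ∀ i, 2 ≤ i → i ≤ Fintype.card V → deltaSeq G i ≤ deltaSeq G (i - 1) → 2 ≤ deltaSeq G i

/-- The `d`-th cartesian power of `G`. -/
def cartPower {V : Type*} (G : SimpleGraph V) (d : ℕ) : SimpleGraph (Fin d → V) where
  Adj x y := ∃ i, G.Adj (x i) (y i) ∧ ∀ j, j ≠ i → x j = y j
  symm := by
    constructor
    rintro x y ⟨i, h, hj⟩
    exact ⟨i, h.symm, fun j hje => (hj j hje).symm⟩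
  loopless := by
    constructor
    rintro x ⟨i, h, -⟩
    exact G.loopless.irrefl _ h

/-- The initial segment `{0, …, k-1}` of `Fin N`. -/
def finSeg (N k : ℕ) : Finset (Fin N) :=
  Finset.univ.filter (fun v => (v : ℕ) < k)

/-- The set of the first `m` elements under a (strict total) order `r`. -/
noncomputable def initSeg {α : Type*} [Fintype α] (r : α → α → Prop) (m : ℕ) : Finset α :=
  Finset.univ.filter (fun u => (Finset.univ.filter (fun w => r w u)).card < m)

/-- Strict lexicographic order on tuples. -/
def lexLt {n N : ℕ} (x y : Fin n → Fin N) : Prop :=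
  ∃ i, (∀ j, j < i → x j = y j) ∧ x i < y i

/-- Strict colexicographic order on tuples. -/
def colexLt {n N : ℕ} (x y : Fin n → Fin N) : Prop :=
  ∃ i, (∀ j, i < j → x j = y j) ∧ x i < y i

/-- Strict lexicographic order on pairs. -/
def lexPair {N : ℕ} (p q : Fin N × Fin N) : Prop :=
  p.1 < q.1 ∨ (p.1 = q.1 ∧ p.2 < q.2)

/-- Strict colexicographic order on pairs. -/
def colexPair {N : ℕ} (p q : Fin N × Fin N) : Prop :=
  p.2 < q.2 ∨ (p.2 = q.2 ∧ p.1 < q.1)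

/-- A subset of `Fin M × Fin N` is compressed. -/
def IsCompressed {M N : ℕ} (A : Finset (Fin M × Fin N)) : Prop :=
  (∀ a : Fin M, ∀ y y' : Fin N, (a, y) ∈ A → y' ≤ y → (a, y') ∈ A) ∧
  (∀ b : Fin N, ∀ x x' : Fin M, (x, b) ∈ A → x' ≤ x → (x', b) ∈ A)

/-- Number of boundary edges: edges with exactly one endpoint in `A`. -/
noncomputable def edgesBd {V : Type*} [Fintype V] (G : SimpleGraph V) (A : Finset V) : ℕ :=
  (G.edgeFinset.filter (fun e => ∃ u ∈ e, ∃ v ∈ e, u ∈ A ∧ v ∉ A)).card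

lemma edgesIn_insert {V : Type*} [Fintype V] (G : SimpleGraph V) (A : Finset V) (x : V)
    (hx : x ∉ A) :
    edgesIn G (insert x A) = edgesIn G A + (A.filter (G.Adj x)).card := by
  classical
  unfold edgesIn
  rw [← Finset.card_filter_add_card_filter_not
    (s := G.edgeFinset.filter (fun e => ∀ v ∈ e, v ∈ insert x A)) (p := fun e => x ∈ e)]
  have h2 : (G.edgeFinset.filter (fun e => ∀ v ∈ e, v ∈ insert x A)).filter
      (fun e => ¬ x ∈ e) = G.edgeFinset.filter (fun e => ∀ v ∈ e, v ∈ A) := by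
    ext e
    simp only [Finset.mem_filter, Finset.mem_insert]
    constructor
    · rintro ⟨⟨he, hall⟩, hxe⟩
      exact ⟨he, fun v hv => (hall v hv).resolve_left (fun h => hxe (h ▸ hv))⟩
    · rintro ⟨he, hall⟩
      exact ⟨⟨he, fun v hv => Or.inr (hall v hv)⟩, fun hxe => hx (hall x hxe)⟩
  have h1 : (G.edgeFinset.filter (fun e => ∀ v ∈ e, v ∈ insert x A)).filter
      (fun e => x ∈ e) = (A.filter (G.Adj x)).image (fun y => Sym2.mk x y) := by
    ext e
    induction e using Sym2.ind with
    | _ u v =>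
      simp only [Finset.mem_filter, Finset.mem_insert, Finset.mem_image,
        SimpleGraph.mem_edgeFinset, Sym2.mem_iff, SimpleGraph.mem_edgeSet]
      constructor
      · rintro ⟨⟨hadj, hall⟩, hxe⟩
        rcases hxe with h | h
        · have hadj' : G.Adj x v := by rw [h]; exact hadj
          have hv : v ∈ A := by
            rcases hall v (Or.inr rfl) with h' | h'
            · rw [h'] at hadj'
              exact absurd hadj' (G.loopless.irrefl x)
            · exact h'
          exact ⟨v, ⟨hv, hadj'⟩, by rw [h]⟩
        · have hadj' : G.Adj x u := by rw [h]; exact hadj.symm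
          have hu : u ∈ A := by
            rcases hall u (Or.inl rfl) with h' | h'
            · rw [h'] at hadj'
              exact absurd hadj' (G.loopless.irrefl x)
            · exact h'
          refine ⟨u, ⟨hu, hadj'⟩, ?_⟩
          rw [h]
          exact Sym2.eq_swap
      · rintro ⟨y, ⟨hy, hadj⟩, heq⟩
        rw [Sym2.eq_iff] at heq
        rcases heq with ⟨h1, h2⟩ | ⟨h1, h2⟩
        · subst h1; subst h2
          refine ⟨⟨hadj, ?_⟩, Or.inl rfl⟩
          rintro w (rfl | rfl)
          · exact Or.inl rfl
          · exact Or.inr hy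
        · subst h1; subst h2
          refine ⟨⟨hadj.symm, ?_⟩, Or.inr rfl⟩
          rintro w (rfl | rfl)
          · exact Or.inr hy
          · exact Or.inl rfl
  have hinj : Function.Injective (fun y : V => Sym2.mk x y) := fun a b h => by
    simpa using Sym2.congr_right.mp h
  rw [h1, h2, Finset.card_image_of_injective _ hinj, Nat.add_comm]

lemma edgesIn_le_max {V : Type*} [Fintype V] (G : SimpleGraph V) (A : Finset V) :
    edgesIn G A ≤ maxEdgesIn G A.card :=
  Finset.le_sup (Finset.mem_powersetCard.mpr ⟨Finset.subset_univ _, rfl⟩)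

lemma maxEdgesIn_zero {V : Type*} [Fintype V] (G : SimpleGraph V) :
    maxEdgesIn G 0 = 0 := by
  classical
  apply Nat.le_zero.mp
  apply Finset.sup_le
  intro A hA
  rw [Finset.mem_powersetCard] at hA
  have : A = ∅ := Finset.card_eq_zero.mp hA.2
  subst this
  rw [Nat.le_zero]
  unfold edgesIn
  rw [Finset.card_eq_zero, Finset.eq_empty_iff_forall_notMem]
  intro e he
  rw [Finset.mem_filter] at he
  induction e using Sym2.ind with
  | _ u v => exact absurd (he.2 u (Sym2.mem_mk_left u v)) (Finset.notMem_empty u)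

/-- If `G` has nested solutions then
`δ_G(i+1) - δ_G(i) ≤ 1` for all `i ∈ {1, …, |V| - 1}`. -/
theorem stmt_1 {V : Type*} [Fintype V] (G : SimpleGraph V) (hNS : hasNS G)
    (i : ℕ) (hi1 : 1 ≤ i) (hi2 : i ≤ Fintype.card V - 1) :
    deltaSeq G (i + 1) - deltaSeq G i ≤ 1 := by
  classical
  obtain ⟨A, hchain, hspec⟩ := hNS
  have hV : 2 ≤ Fintype.card V := by omega
  obtain ⟨hAi_card, hAi_max⟩ := hspec i hi1 (by omega)
  obtain ⟨hAi1_card, hAi1_max⟩ := hspec (i + 1) (by omega) (by omega)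
  have hsub := hchain i hi1 (by omega)
  have hne : (A (i + 1) \ A i).Nonempty := by
    rw [Finset.sdiff_nonempty]
    intro h
    have := Finset.card_le_card h
    omega
  obtain ⟨x, hx⟩ := hne
  rw [Finset.mem_sdiff] at hx
  have hxA : x ∉ A i := hx.2
  have hins : A (i + 1) = insert x (A i) := by
    refine (Finset.eq_of_subset_of_card_le (Finset.insert_subset hx.1 hsub) ?_).symm
    rw [Finset.card_insert_of_notMem hxA, hAi_card, hAi1_card]
  obtain ⟨B, hBsub, hBcard, hBmax⟩ : ∃ B : Finset V, B ⊆ A i ∧ B.card = i - 1 ∧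
      edgesIn G B = maxEdgesIn G (i - 1) := by
    rcases eq_or_lt_of_le hi1 with h1 | h2
    · refine ⟨∅, Finset.empty_subset _, by rw [Finset.card_empty]; omega, ?_⟩
      rw [← h1]
      simp only [Nat.sub_self, maxEdgesIn_zero]
      unfold edgesIn
      rw [Finset.card_eq_zero, Finset.eq_empty_iff_forall_notMem]
      intro e he
      rw [Finset.mem_filter] at he
      induction e using Sym2.ind with
      | _ u v => exact absurd (he.2 u (Sym2.mem_mk_left u v)) (Finset.notMem_empty u)
    · obtain ⟨hc, hm⟩ := hspec (i - 1) (by omega) (by omega)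
      have hch := hchain (i - 1) (by omega) (by omega)
      rw [show i - 1 + 1 = i by omega] at hch
      exact ⟨A (i - 1), hch, hc, hm⟩
  have hzne : (A i \ B).Nonempty := by
    rw [Finset.sdiff_nonempty]
    intro h
    have := Finset.card_le_card h
    omega
  obtain ⟨z, hz⟩ := hzne
  rw [Finset.mem_sdiff] at hz
  have hinsz : A i = insert z B := by
    refine (Finset.eq_of_subset_of_card_le (Finset.insert_subset hz.1 hBsub) ?_).symm
    rw [Finset.card_insert_of_notMem hz.2, hAi_card, hBcard]
    omega
  have hd : edgesIn G (A i) = edgesIn G B + (B.filter (G.Adj z)).card := by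
    rw [hinsz]
    exact edgesIn_insert G B z hz.2
  have hxB : x ∉ B := fun h => hxA (hBsub h)
  have hzx : z ≠ x := fun h => hxA (h ▸ hz.1)
  have hrw : A (i + 1) = insert z (insert x B) := by
    rw [hins, hinsz, Finset.insert_comm]
  have hzxB : z ∉ insert x B := by
    simp only [Finset.mem_insert, not_or]
    exact ⟨hzx, hz.2⟩
  have hd2 : edgesIn G (A (i + 1)) =
      edgesIn G (insert x B) + ((insert x B).filter (G.Adj z)).card := by
    rw [hrw]
    exact edgesIn_insert G _ z hzxB
  have hfle : ((insert x B).filter (G.Adj z)).card ≤ (B.filter (G.Adj z)).card + 1 := by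
    rw [Finset.filter_insert]
    split_ifs
    · exact Finset.card_insert_le _ _
    · exact Nat.le_succ _
  have hcard_ins : (insert x B).card = i := by
    rw [Finset.card_insert_of_notMem hxB, hBcard]
    omega
  have hEle : edgesIn G (insert x B) ≤ maxEdgesIn G i := by
    have := edgesIn_le_max G (insert x B)
    rwa [hcard_ins] at this
  unfold deltaSeq
  rw [show i + 1 - 1 = i from rfl]
  have e1 : maxEdgesIn G (i + 1) = edgesIn G (A (i + 1)) := hAi1_max.symm
  have e2 : maxEdgesIn G i = edgesIn G (A i) := hAi_max.symm
  omega
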